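/- Let S be a finite nonempty set, μ⁰ a probability distribution on S with full support, V : S → [0, H], and λ > 0. Then inf over probability distributions μ on S of E_{s∼μ}[V(s)] + λ·D_{χ²}(μ‖μ⁰) equals sup_{α ∈ [V_min, V_max]} { E_{s∼μ⁰}[min(V(s), α)] − (1/(4λ))·Var_{s∼μ⁰}[min(V(s), α)] }, where V_min and V_max are the minimum and maximum of V over S. -/

import Mathlib

theorem chi2_weak {S : Type*} [Fintype S]
    (μ0 μ : S → ℝ) (hμ0pos : ∀ s, 0 < μ0 s) (hμ0sum : ∑ s, μ0 s = 1)
    (hμpos : ∀ s, 0 ≤ μ s) (hμsum : ∑ s, μ s = 1)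
    (V : S → ℝ) (lam : ℝ) (hlam : 0 < lam) (α : ℝ) :
    (∑ s, μ0 s * min (V s) α) - (1 / (4 * lam)) *
      ((∑ s, μ0 s * (min (V s) α) ^ 2) - (∑ s, μ0 s * min (V s) α) ^ 2)
      ≤ ∑ s, μ s * V s + lam * ∑ s, (μ s - μ0 s) ^ 2 / μ0 s := by
  set W : S → ℝ := fun s => min (V s) α with hW
  set c : ℝ := ∑ s, μ0 s * W s with hc
  have hterm : ∀ s, 0 ≤ μ s * (V s - W s) +
      ((μ s - μ0 s) * (W s - c) + lam * ((μ s - μ0 s) ^ 2 / μ0 s)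
        + μ0 s * (W s - c) ^ 2 / (4 * lam)) := by
    intro s
    have hp := hμ0pos s
    have h1 : 0 ≤ μ s * (V s - W s) :=
      mul_nonneg (hμpos s) (by simp [hW, sub_nonneg, min_le_left])
    have h2 : (μ s - μ0 s) * (W s - c) + lam * ((μ s - μ0 s) ^ 2 / μ0 s)
        + μ0 s * (W s - c) ^ 2 / (4 * lam)
        = (2 * lam * (μ s - μ0 s) + μ0 s * (W s - c)) ^ 2 / (4 * lam * μ0 s) := by
      field_simp
      ring
    have h3 : 0 ≤ (2 * lam * (μ s - μ0 s) + μ0 s * (W s - c)) ^ 2 / (4 * lam * μ0 s) :=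
      div_nonneg (sq_nonneg _) (by positivity)
    rw [← h2] at h3
    linarith
  have hsum : 0 ≤ ∑ s, (μ s * (V s - W s) +
      ((μ s - μ0 s) * (W s - c) + lam * ((μ s - μ0 s) ^ 2 / μ0 s)
        + μ0 s * (W s - c) ^ 2 / (4 * lam))) :=
    Finset.sum_nonneg fun s _ => hterm s
  have hexp : ∑ s, (μ s * (V s - W s) +
      ((μ s - μ0 s) * (W s - c) + lam * ((μ s - μ0 s) ^ 2 / μ0 s)
        + μ0 s * (W s - c) ^ 2 / (4 * lam)))
      = (∑ s, μ s * V s) - c * (∑ s, μ s) + lam * (∑ s, (μ s - μ0 s) ^ 2 / μ0 s)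
        - (∑ s, μ0 s * W s) + c * (∑ s, μ0 s)
        + (1 / (4 * lam)) * (∑ s, μ0 s * (W s) ^ 2)
        - (c / (2 * lam)) * (∑ s, μ0 s * W s) + (c ^ 2 / (4 * lam)) * (∑ s, μ0 s) := by
    simp only [Finset.mul_sum, ← Finset.sum_sub_distrib, ← Finset.sum_add_distrib]
    refine Finset.sum_congr rfl fun s _ => ?_
    have hp := (hμ0pos s).ne'
    have hl := hlam.ne'
    field_simp
    ring
  rw [hμsum, hμ0sum, ← hc] at hexp
  rw [hexp] at hsum
  have e2 : c / (2 * lam) * c = 2 * (c ^ 2 / (4 * lam)) := by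
    field_simp; ring
  have e3 : (1 / (4 * lam)) * ((∑ s, μ0 s * (W s) ^ 2) - c ^ 2)
      = (1 / (4 * lam)) * (∑ s, μ0 s * (W s) ^ 2) - c ^ 2 / (4 * lam) := by ring
  rw [e3]
  linarith

theorem chi2_eq {S : Type*} [Fintype S]
    (μ0 : S → ℝ) (hμ0pos : ∀ s, 0 < μ0 s) (hμ0sum : ∑ s, μ0 s = 1)
    (V : S → ℝ) (lam α : ℝ) (hlam : 0 < lam)
    (hup : ∀ s, min (V s) α ≤ (∑ s, μ0 s * min (V s) α) + 2 * lam)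
    (hzero : ∀ s, min (V s) α < V s → α = (∑ s, μ0 s * min (V s) α) + 2 * lam) :
    ∃ μ : S → ℝ, (∀ s, 0 ≤ μ s) ∧ (∑ s, μ s = 1) ∧
      ∑ s, μ s * V s + lam * ∑ s, (μ s - μ0 s) ^ 2 / μ0 s
        = (∑ s, μ0 s * min (V s) α) - (1 / (4 * lam)) *
            ((∑ s, μ0 s * (min (V s) α) ^ 2) - (∑ s, μ0 s * min (V s) α) ^ 2) := by
  set W : S → ℝ := fun s => min (V s) α with hW
  set c : ℝ := ∑ s, μ0 s * W s with hc
  set E2 : ℝ := ∑ s, μ0 s * (W s) ^ 2 with hE2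
  refine ⟨fun s => μ0 s * (1 - (W s - c) / (2 * lam)), ?_, ?_, ?_⟩
  · intro s
    have h1 : (W s - c) / (2 * lam) ≤ 1 := by
      rw [div_le_one (by positivity)]
      have := hup s
      simp only [hW] at this ⊢
      linarith
    exact mul_nonneg (hμ0pos s).le (by linarith)
  · have : ∀ s, μ0 s * (1 - (W s - c) / (2 * lam))
        = μ0 s - (1 / (2 * lam)) * (μ0 s * W s) + (c / (2 * lam)) * μ0 s := by
      intro s; field_simp; ring
    rw [Finset.sum_congr rfl fun s _ => this s]
    rw [Finset.sum_add_distrib, Finset.sum_sub_distrib, ← Finset.mul_sum, ← Finset.mul_sum,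
      hμ0sum, ← hc]
    field_simp
    ring
  · have hμV : ∀ s, (μ0 s * (1 - (W s - c) / (2 * lam))) * V s
        = (μ0 s * (1 - (W s - c) / (2 * lam))) * W s := by
      intro s
      rcases eq_or_lt_of_le (min_le_left (V s) α) with h | h
      · have : W s = V s := h
        rw [this]
      · have hz := hzero s h
        have hVα : α < V s := by
          rcases le_or_gt (V s) α with h' | h'
          · exfalso; simp [hW, min_eq_left h'] at h
          · exact h'
        have hWs : W s = α := by simp [hW, min_eq_right hVα.le]
        rw [hWs]
        have : μ0 s * (1 - (α - c) / (2 * lam)) = 0 := by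
          have : (α - c) / (2 * lam) = 1 := by
            rw [div_eq_one_iff_eq (by positivity)]
            linarith
          rw [this]; ring
        rw [this]; ring
    have h1 : ∑ s, (μ0 s * (1 - (W s - c) / (2 * lam))) * V s
        = c - (1 / (2 * lam)) * E2 + (c ^ 2 / (2 * lam)) := by
      rw [Finset.sum_congr rfl fun s _ => hμV s]
      have : ∀ s, (μ0 s * (1 - (W s - c) / (2 * lam))) * W s
          = μ0 s * W s - (1 / (2 * lam)) * (μ0 s * (W s) ^ 2)
            + (c / (2 * lam)) * (μ0 s * W s) := by
        intro s; field_simp; ring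
      rw [Finset.sum_congr rfl fun s _ => this s]
      rw [Finset.sum_add_distrib, Finset.sum_sub_distrib, ← Finset.mul_sum, ← Finset.mul_sum,
        ← hc, ← hE2]
      field_simp
    have h2 : ∑ s, ((μ0 s * (1 - (W s - c) / (2 * lam))) - μ0 s) ^ 2 / μ0 s
        = (1 / (4 * lam ^ 2)) * (E2 - 2 * c * c + c ^ 2) := by
      have : ∀ s, ((μ0 s * (1 - (W s - c) / (2 * lam))) - μ0 s) ^ 2 / μ0 s
          = (1 / (4 * lam ^ 2)) * (μ0 s * (W s) ^ 2)
            - (2 * c / (4 * lam ^ 2)) * (μ0 s * W s) + (c ^ 2 / (4 * lam ^ 2)) * μ0 s := by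
        intro s
        have hp := (hμ0pos s).ne'
        field_simp
        ring
      rw [Finset.sum_congr rfl fun s _ => this s]
      rw [Finset.sum_add_distrib, Finset.sum_sub_distrib, ← Finset.mul_sum, ← Finset.mul_sum,
        ← Finset.mul_sum, ← hc, ← hE2, hμ0sum]
      ring
    rw [h1, h2]
    field_simp
    ring

theorem chi2_duality {S : Type*} [Fintype S] [Nonempty S]
    (μ0 : S → ℝ) (hμ0pos : ∀ s, 0 < μ0 s) (hμ0sum : ∑ s, μ0 s = 1)
    (V : S → ℝ) (H lam : ℝ) (hH : 0 ≤ H) (hV : ∀ s, 0 ≤ V s ∧ V s ≤ H)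
    (hlam : 0 < lam) :
    sInf {x : ℝ | ∃ μ : S → ℝ, (∀ s, 0 ≤ μ s) ∧ (∑ s, μ s = 1) ∧
        x = ∑ s, μ s * V s + lam * ∑ s, (μ s - μ0 s) ^ 2 / μ0 s} =
      sSup {x : ℝ | ∃ α : ℝ,
        α ∈ Set.Icc (Finset.univ.inf' Finset.univ_nonempty V)
          (Finset.univ.sup' Finset.univ_nonempty V) ∧
        x = (∑ s, μ0 s * min (V s) α) -
          (1 / (4 * lam)) *
            ((∑ s, μ0 s * (min (V s) α) ^ 2) - (∑ s, μ0 s * min (V s) α) ^ 2)} := by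
  classical
  set m : ℝ := Finset.univ.inf' Finset.univ_nonempty V with hm
  set M : ℝ := Finset.univ.sup' Finset.univ_nonempty V with hM
  set P : Set ℝ := {x : ℝ | ∃ μ : S → ℝ, (∀ s, 0 ≤ μ s) ∧ (∑ s, μ s = 1) ∧
      x = ∑ s, μ s * V s + lam * ∑ s, (μ s - μ0 s) ^ 2 / μ0 s} with hP
  set D : Set ℝ := {x : ℝ | ∃ α : ℝ, α ∈ Set.Icc m M ∧
      x = (∑ s, μ0 s * min (V s) α) - (1 / (4 * lam)) *
        ((∑ s, μ0 s * (min (V s) α) ^ 2) - (∑ s, μ0 s * min (V s) α) ^ 2)} with hD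
  have hmM : m ≤ M := by
    obtain ⟨s0⟩ := (inferInstance : Nonempty S)
    exact le_trans (Finset.inf'_le _ (Finset.mem_univ s0))
      (Finset.le_sup' _ (Finset.mem_univ s0))
  have hPne : P.Nonempty :=
    ⟨_, μ0, fun s => (hμ0pos s).le, hμ0sum, rfl⟩
  have hDne : D.Nonempty := ⟨_, m, ⟨le_refl m, hmM⟩, rfl⟩
  have hweak : ∀ d ∈ D, ∀ p ∈ P, d ≤ p := by
    rintro d ⟨α, hα, rfl⟩ p ⟨μ, h1, h2, rfl⟩
    exact chi2_weak μ0 μ hμ0pos hμ0sum h1 h2 V lam hlam α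
  have hbddP : BddBelow P := by
    obtain ⟨d, hd⟩ := hDne
    exact ⟨d, fun p hp => hweak d hd p hp⟩
  have hbddD : BddAbove D := by
    obtain ⟨p, hp⟩ := hPne
    exact ⟨p, fun d hd => hweak d hd p hp⟩
  -- find α* with equality
  have hVm : ∀ s, m ≤ V s := fun s => Finset.inf'_le _ (Finset.mem_univ s)
  have hVM : ∀ s, V s ≤ M := fun s => Finset.le_sup' _ (Finset.mem_univ s)
  set f : ℝ → ℝ := fun α => α - (∑ s, μ0 s * min (V s) α) - 2 * lam with hf
  have hfc : Continuous f := by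
    apply Continuous.sub
    apply Continuous.sub continuous_id
    exact continuous_finset_sum _ fun s _ =>
      continuous_const.mul (continuous_const.min continuous_id)
    exact continuous_const
  have hfm : f m = -(2 * lam) := by
    have : ∀ s, min (V s) m = m := fun s => min_eq_right (hVm s)
    simp only [hf]
    rw [Finset.sum_congr rfl fun s _ => by rw [this s]]
    rw [← Finset.sum_mul, hμ0sum]
    ring
  have key : ∃ α ∈ Set.Icc m M,
      (∀ s, min (V s) α ≤ (∑ s, μ0 s * min (V s) α) + 2 * lam) ∧
      (∀ s, min (V s) α < V s → α = (∑ s, μ0 s * min (V s) α) + 2 * lam) := by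
    rcases le_or_gt (f M) 0 with hfM | hfM
    · refine ⟨M, ⟨hmM, le_refl M⟩, ?_, ?_⟩
      · intro s
        have hmin : ∀ t, min (V t) M = V t := fun t => min_eq_left (hVM t)
        have hsum : (∑ t, μ0 t * min (V t) M) = ∑ t, μ0 t * V t := by
          exact Finset.sum_congr rfl fun t _ => by rw [hmin t]
        rw [hmin s, hsum]
        have : M - (∑ t, μ0 t * V t) - 2 * lam ≤ 0 := by
          simpa [hf, hsum] using hfM
        linarith [hVM s]
      · intro s hs
        rw [min_eq_left (hVM s)] at hs
        exact absurd hs (lt_irrefl _)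
    · have h0 : (0 : ℝ) ∈ Set.Icc (f m) (f M) := by
        constructor
        · rw [hfm]; linarith
        · exact hfM.le
      have := intermediate_value_Icc hmM hfc.continuousOn h0
      obtain ⟨α, hα, hfα⟩ := this
      refine ⟨α, hα, ?_, ?_⟩
      · intro s
        have : α = (∑ t, μ0 t * min (V t) α) + 2 * lam := by
          simp only [hf] at hfα
          linarith
        calc min (V s) α ≤ α := min_le_right _ _
        _ = _ := this
      · intro s _
        simp only [hf] at hfα
        linarith
  obtain ⟨α, hαIcc, hup, hzero⟩ := key
  obtain ⟨μ, hμpos, hμsum, heq⟩ := chi2_eq μ0 hμ0pos hμ0sum V lam α hlam hup hzero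
  set x : ℝ := ∑ s, μ s * V s + lam * ∑ s, (μ s - μ0 s) ^ 2 / μ0 s with hx
  have hxP : x ∈ P := ⟨μ, hμpos, hμsum, rfl⟩
  have hxD : x ∈ D := ⟨α, hαIcc, heq⟩
  apply le_antisymm
  · exact le_trans (csInf_le hbddP hxP) (le_csSup hbddD hxD)
  · exact csSup_le hDne fun d hd => le_csInf hPne fun p hp => hweak d hd p hp
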